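/- arXiv:1503.04893 — 5 statements merged into one kernel-verified Lean document; each statement's English description precedes it below -/
import Mathlib

section
/- Let w₁, w₂, w₃ be positive integers, y₁, y₂, y₃ nonnegative integers and n a nonnegative integer. Define E(w₁,w₂,w₃) = ∑_{k+l+m=n} binom(n;k,l,m) · [w₂w₃]_q^k · [w₁w₃]_q^l · [w₁w₂]_q^m · q^{w₁w₂w₃(l+m)y₁} · q^{w₁w₂w₃ m y₂} · β_{k,q^{w₂w₃}}^{(l+m+1)}(w₁y₁) · β_{l,q^{w₁w₃}}^{(m+1)}(w₂y₂) · β_{m,q^{w₁w₂}}(w₃y₃), where the sum is over all triples (k,l,m) of nonnegative integers with k+l+m = n. Then E(w_{σ(1)}, w_{σ(2)}, w_{σ(3)}) = E(w₁, w₂, w₃) for every permutation σ of {1,2,3}; that is, the expression is invariant under the symmetry group S₃ acting on (w₁,w₂,w₃). -/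
open Finset

/-- The `q`-number `[x]_q = (1 - q^x)/(1 - q)` of a nonnegative integer `x`. -/
noncomputable def qnum {K : Type*} [Field K] (q : K) (x : ℕ) : K :=
  (1 - q ^ x) / (1 - q)

/-- The generalized Carlitz `q`-Bernoulli polynomials
`β_{n,q}^{(h)}(x) = (1-q)^{-n} ∑_{j=0}^{n} C(n,j) (-1)^j q^{jx} (j+h)/[j+h]_q`;
`β_{n,q}(x) = β_{n,q}^{(1)}(x)`. -/
noncomputable def carlitzBetaH {K : Type*} [Field K] (q : K) (h n x : ℕ) : K :=
  ((1 - q) ^ n)⁻¹ * ∑ j ∈ Finset.range (n + 1),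
    (n.choose j : K) * (-1) ^ j * q ^ (j * x) * ((j + h : ℕ) : K) / qnum q (j + h)

/-- The multinomial coefficient `binom(n; k, l, m) = n! / (k! l! m!)`. -/
def multi3 (n k l m : ℕ) : ℕ :=
  n.factorial / (k.factorial * l.factorial * m.factorial)

/-- The expression `E(w₁,w₂,w₃)` of Statement 0: the sum over all `k + l + m = n` of
`binom(n;k,l,m) [w₂w₃]_q^k [w₁w₃]_q^l [w₁w₂]_q^m q^{w₁w₂w₃(l+m)y₁} q^{w₁w₂w₃ m y₂}
  β_{k,q^{w₂w₃}}^{(l+m+1)}(w₁y₁) β_{l,q^{w₁w₃}}^{(m+1)}(w₂y₂) β_{m,q^{w₁w₂}}(w₃y₃)`. -/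
noncomputable def E0 {K : Type*} [Field K] (q : K) (n y1 y2 y3 w1 w2 w3 : ℕ) : K :=
  ∑ k ∈ Finset.range (n + 1), ∑ l ∈ Finset.range (n + 1 - k),
    (multi3 n k l (n - k - l) : K) *
      qnum q (w2 * w3) ^ k * qnum q (w1 * w3) ^ l * qnum q (w1 * w2) ^ (n - k - l) *
      q ^ (w1 * w2 * w3 * (l + (n - k - l)) * y1) *
      q ^ (w1 * w2 * w3 * (n - k - l) * y2) *
      carlitzBetaH (q ^ (w2 * w3)) (l + (n - k - l) + 1) k (w1 * y1) *
      carlitzBetaH (q ^ (w1 * w3)) ((n - k - l) + 1) l (w2 * y2) *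
      carlitzBetaH (q ^ (w1 * w2)) 1 (n - k - l) (w3 * y3)

section Aux

variable {K : Type*} [Field K]

noncomputable def dd (F : ℕ → K) (k x : ℕ) : K :=
  ∑ i ∈ Finset.range (k + 1), (-1) ^ i * (k.choose i : K) * F (x + i)

lemma dd_zero (F : ℕ → K) (x : ℕ) : dd F 0 x = F x := by simp [dd]

lemma dd_succ (F : ℕ → K) (k x : ℕ) : dd F (k + 1) x = dd F k x - dd F k (x + 1) := by
  have hsplit : ∀ i : ℕ, (-1:K) ^ (i+1) * (((k+1).choose (i+1) : K)) * F (x+(i+1))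
      = -((-1) ^ i * (k.choose i : K) * F ((x+1)+i))
        + (-1) ^ (i+1) * (k.choose (i+1) : K) * F (x+(i+1)) := by
    intro i
    have h1 : (x+1)+i = x+(i+1) := by omega
    have h2 : ((k+1).choose (i+1) : K) = (k.choose i : K) + (k.choose (i+1) : K) := by
      rw [Nat.choose_succ_succ]; push_cast; ring
    rw [h1, h2]; ring
  have e1 : dd F (k+1) x
      = (∑ i ∈ Finset.range (k+1),
          ((-1:K) ^ (i+1) * (((k+1).choose (i+1) : K)) * F (x+(i+1)))) + F x := by
    rw [dd, Finset.sum_range_succ']; simp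
  have e2 : (∑ i ∈ Finset.range (k+1), ((-1:K) ^ (i+1) * ((k.choose (i+1) : K)) * F (x+(i+1))))
      = dd F k x - F x := by
    have := Finset.sum_range_succ' (fun j => (-1:K) ^ j * (k.choose j : K) * F (x+j)) (k+1)
    have htop : (∑ j ∈ Finset.range (k+1+1), (-1:K) ^ j * (k.choose j : K) * F (x+j))
        = dd F k x := by
      rw [Finset.sum_range_succ, dd]; simp
    rw [htop] at this
    simp only [Nat.choose_zero_right, Nat.cast_one, pow_zero, one_mul, add_zero] at this
    rw [this]; ring
  have e3 : (∑ i ∈ Finset.range (k+1), -((-1:K) ^ i * ((k.choose i : K)) * F ((x+1)+i)))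
      = - dd F k (x+1) := by
    rw [dd]; exact Finset.sum_neg_distrib (G := K) _
  calc dd F (k+1) x
      = (∑ i ∈ Finset.range (k+1),
          (-((-1:K) ^ i * (k.choose i : K) * F ((x+1)+i))
            + (-1) ^ (i+1) * (k.choose (i+1) : K) * F (x+(i+1)))) + F x := by
        rw [e1]; congr 1; exact Finset.sum_congr rfl fun i _ => hsplit i
    _ = (- dd F k (x+1)) + (dd F k x - F x) + F x := by
        rw [Finset.sum_add_distrib, e2, e3]
    _ = dd F k x - dd F k (x+1) := by ring

lemma dd_leibniz (A B : ℕ → K) (n : ℕ) : ∀ x, dd (fun t => A t * B t) n x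
    = ∑ p ∈ Finset.HasAntidiagonal.antidiagonal n, (n.choose p.1 : K) * dd A p.1 (x + p.2) * dd B p.2 x := by
  induction n with
  | zero => intro x; simp [dd_zero]
  | succ n ih =>
    intro x
    have lhs_eq : dd (fun t => A t * B t) (n+1) x
        = (∑ p ∈ Finset.HasAntidiagonal.antidiagonal n,
            (n.choose p.1 : K) * dd A (p.1+1) (x + p.2) * dd B p.2 x)
          + ∑ p ∈ Finset.HasAntidiagonal.antidiagonal n,
            (n.choose p.1 : K) * dd A p.1 (x + (p.2+1)) * dd B (p.2+1) x := by
      rw [dd_succ, ih x, ih (x+1), ← Finset.sum_sub_distrib, ← Finset.sum_add_distrib]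
      refine Finset.sum_congr rfl fun p _ => ?_
      have hA : dd A p.1 (x + p.2) = dd A (p.1+1) (x + p.2) + dd A p.1 (x + p.2 + 1) := by
        rw [dd_succ]; ring
      have hB : dd B p.2 (x+1) = dd B p.2 x - dd B (p.2+1) x := by
        rw [dd_succ]; ring
      have hx : x + 1 + p.2 = x + p.2 + 1 := by omega
      have hx2 : x + (p.2+1) = x + p.2 + 1 := by omega
      rw [hA, hx, hB, hx2]; ring
    have key : (∑ p ∈ Finset.HasAntidiagonal.antidiagonal n,
          (n.choose p.1 : K) * dd A p.1 (x + (p.2+1)) * dd B (p.2+1) x)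
        = ((n.choose 0 : K) * dd A 0 (x + (n+1)) * dd B (n+1) x)
          + ∑ p ∈ Finset.HasAntidiagonal.antidiagonal n,
            (n.choose (p.1+1) : K) * dd A (p.1+1) (x + p.2) * dd B p.2 x := by
      have h1 := Finset.Nat.sum_antidiagonal_succ
        (f := fun p : ℕ × ℕ => (n.choose p.1 : K) * dd A p.1 (x + p.2) * dd B p.2 x) (n := n)
      have h2 := Finset.Nat.sum_antidiagonal_succ'
        (f := fun p : ℕ × ℕ => (n.choose p.1 : K) * dd A p.1 (x + p.2) * dd B p.2 x) (n := n)
      simp only [Nat.choose_succ_self, Nat.cast_zero, zero_mul, zero_add] at h1 h2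
      rw [← h2, h1]
    rw [lhs_eq, key, Finset.Nat.sum_antidiagonal_succ
      (f := fun p : ℕ × ℕ => ((n+1).choose p.1 : K) * dd A p.1 (x + p.2) * dd B p.2 x)]
    have hch : ∀ p : ℕ × ℕ, (((n+1).choose (p.1+1) : K)) * dd A (p.1+1) (x + p.2) * dd B p.2 x
        = (n.choose p.1 : K) * dd A (p.1+1) (x + p.2) * dd B p.2 x
          + (n.choose (p.1+1) : K) * dd A (p.1+1) (x + p.2) * dd B p.2 x := by
      intro p
      have hc : ((n+1).choose (p.1+1) : K) = (n.choose p.1 : K) + (n.choose (p.1+1) : K) := by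
        rw [Nat.choose_succ_succ]; push_cast; ring
      rw [hc]; ring
    rw [Finset.sum_congr rfl fun p _ => hch p, Finset.sum_add_distrib]
    simp only [Nat.choose_zero_right, Nat.cast_one]
    ring


lemma dd_triple (A B C : ℕ → K) (n : ℕ) :
    ∑ k ∈ Finset.range (n+1), ∑ l ∈ Finset.range ((n-k)+1),
      (n.choose k : K) * ((n-k).choose l : K)
        * dd A k (n-k) * dd B l ((n-k)-l) * dd C ((n-k)-l) 0
    = dd (fun a => A a * B a * C a) n 0 := by
  have h0 : dd (fun a => A a * B a * C a) n 0
      = dd (fun a => A a * ((fun t => B t * C t) a)) n 0 := by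
    congr 1; funext a; ring
  rw [h0, dd_leibniz, Finset.Nat.sum_antidiagonal_eq_sum_range_succ_mk]
  refine Finset.sum_congr rfl fun k hk => ?_
  rw [dd_leibniz, Finset.Nat.sum_antidiagonal_eq_sum_range_succ_mk, Finset.mul_sum]
  refine Finset.sum_congr rfl fun l hl => ?_
  simp only [zero_add, Prod.fst, Prod.snd]
  ring

/-- The symmetric closed form. -/
noncomputable def G0 (q : K) (n Y W P1 P2 P3 : ℕ) : K :=
  ((1-q)^n)⁻¹ * ∑ a ∈ Finset.range (n+1),
    (-1)^a * (n.choose a : K) * (((a+1 : ℕ) : K))^3 * q^(W*Y*a)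
      / (qnum (q^P1) (a+1) * qnum (q^P2) (a+1) * qnum (q^P3) (a+1))

lemma G0_swap12 (q : K) (n Y W P1 P2 P3 : ℕ) :
    G0 q n Y W P1 P2 P3 = G0 q n Y W P2 P1 P3 := by
  unfold G0; congr 1; refine Finset.sum_congr rfl fun a _ => ?_; ring

lemma G0_swap23 (q : K) (n Y W P1 P2 P3 : ℕ) :
    G0 q n Y W P1 P2 P3 = G0 q n Y W P1 P3 P2 := by
  unfold G0; congr 1; refine Finset.sum_congr rfl fun a _ => ?_; ring

lemma multi3_eq_aux (n k l : ℕ) (hk : k ≤ n) (hl : l ≤ n - k) :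
    n.factorial / (k.factorial * l.factorial * (n-k-l).factorial)
      = n.choose k * (n-k).choose l := by
  have h1 : n.choose k * k.factorial * (n-k).factorial = n.factorial :=
    Nat.choose_mul_factorial_mul_factorial hk
  have h2 : (n-k).choose l * l.factorial * (n-k-l).factorial = (n-k).factorial :=
    Nat.choose_mul_factorial_mul_factorial hl
  have key : n.factorial
      = (n.choose k * (n-k).choose l) * (k.factorial * l.factorial * (n-k-l).factorial) := by
    rw [← h1, ← h2]; ring
  rw [key, Nat.mul_div_cancel]
  positivity

lemma beta_dd (q : K) (P u y' W k s : ℕ) (hW : P * u = W) :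
    q ^ (W*s*y') * carlitzBetaH (q^P) (s+1) k (u*y')
      = ((1 - q^P)^k)⁻¹
        * dd (fun a => q^(W*y'*a) * ((a+1 : ℕ) : K) / qnum (q^P) (a+1)) k s := by
  unfold carlitzBetaH dd
  rw [mul_left_comm, Finset.mul_sum]
  congr 1
  refine Finset.sum_congr rfl fun i _ => ?_
  have hidx : i + (s+1) = (s+i)+1 := by omega
  rw [hidx, ← pow_mul]
  have hexp : W*s*y' + P*(i*(u*y')) = W*y'*(s+i) := by subst hW; ring
  calc q ^ (W*s*y') * ((k.choose i : K) * (-1)^i * q ^ (P*(i*(u*y'))) * (((s+i)+1 : ℕ) : K)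
          / qnum (q^P) ((s+i)+1))
      = (q ^ (W*s*y') * q ^ (P*(i*(u*y'))))
          * ((-1)^i * (k.choose i : K) * ((((s+i)+1 : ℕ) : K) / qnum (q^P) ((s+i)+1))) := by
        ring
    _ = q ^ (W*y'*(s+i))
          * ((-1)^i * (k.choose i : K) * ((((s+i)+1 : ℕ) : K) / qnum (q^P) ((s+i)+1))) := by
        rw [← pow_add, hexp]
    _ = (-1)^i * (k.choose i : K)
          * (q^(W*y'*(s+i)) * (((s+i)+1 : ℕ) : K) / qnum (q^P) ((s+i)+1)) := by ring

lemma pref_helper (a b : K) (k : ℕ) (ha : a ≠ 0) : (a/b)^k * (a^k)⁻¹ = (b^k)⁻¹ := by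
  rw [div_pow, div_eq_mul_inv, mul_assoc, mul_comm ((b^k)⁻¹), ← mul_assoc,
    mul_inv_cancel₀ (pow_ne_zero k ha), one_mul]

lemma pref (q : K) {P1 P2 P3 : ℕ} (f1 : (1:K) - q^P1 ≠ 0) (f2 : (1:K) - q^P2 ≠ 0)
    (f3 : (1:K) - q^P3 ≠ 0) (k l m n : ℕ) (hn : k + l + m = n) :
    qnum q P1 ^ k * qnum q P2 ^ l * qnum q P3 ^ m
      * (((1-q^P1)^k)⁻¹ * ((1-q^P2)^l)⁻¹ * ((1-q^P3)^m)⁻¹) = ((1-q)^n)⁻¹ := by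
  subst hn
  unfold qnum
  calc ((1-q^P1)/(1-q)) ^ k * ((1-q^P2)/(1-q)) ^ l * ((1-q^P3)/(1-q)) ^ m
      * (((1-q^P1)^k)⁻¹ * ((1-q^P2)^l)⁻¹ * ((1-q^P3)^m)⁻¹)
      = (((1-q^P1)/(1-q))^k * ((1-q^P1)^k)⁻¹) * (((1-q^P2)/(1-q))^l * ((1-q^P2)^l)⁻¹)
        * (((1-q^P3)/(1-q))^m * ((1-q^P3)^m)⁻¹) := by ring
    _ = ((1-q)^k)⁻¹ * ((1-q)^l)⁻¹ * ((1-q)^m)⁻¹ := by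
        rw [pref_helper _ _ _ f1, pref_helper _ _ _ f2, pref_helper _ _ _ f3]
    _ = ((1-q)^(k+l+m))⁻¹ := by rw [pow_add, pow_add, mul_inv, mul_inv]

lemma rearrange {mc a1 a2 a3 p1 p2 b1 b2 b3 i1 i2 i3 d1 d2 d3 cc cc' Z : K}
    (hb1 : p1*b1 = i1*d1) (hb2 : p2*b2 = i2*d2) (hb3 : b3 = i3*d3) (hm : mc = cc * cc')
    (hp : a1*a2*a3*(i1*i2*i3) = Z) :
    mc * a1 * a2 * a3 * p1 * p2 * b1 * b2 * b3 = Z * (cc * cc' * d1 * d2 * d3) := by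
  calc mc * a1 * a2 * a3 * p1 * p2 * b1 * b2 * b3
      = mc * (a1*a2*a3) * (p1*b1) * (p2*b2) * b3 := by ring
    _ = (cc * cc') * (a1*a2*a3) * (i1*d1) * (i2*d2) * (i3*d3) := by
        rw [hb1, hb2, hb3, hm]
    _ = (a1*a2*a3*(i1*i2*i3)) * (cc * cc' * d1 * d2 * d3) := by ring
    _ = Z * (cc * cc' * d1 * d2 * d3) := by rw [hp]

lemma E0_eq (q : K) (hq : q ≠ 1) (hq' : ∀ m : ℕ, 0 < m → q ^ m ≠ 1)
    (n y1 y2 y3 w1 w2 w3 : ℕ) (h1 : 0 < w1) (h2 : 0 < w2) (h3 : 0 < w3) :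
    E0 q n y1 y2 y3 w1 w2 w3
      = G0 q n (y1+y2+y3) (w1*w2*w3) (w2*w3) (w1*w3) (w1*w2) := by
  have f1 : (1:K) - q^(w2*w3) ≠ 0 :=
    sub_ne_zero.mpr (Ne.symm (hq' _ (Nat.mul_pos h2 h3)))
  have f2 : (1:K) - q^(w1*w3) ≠ 0 :=
    sub_ne_zero.mpr (Ne.symm (hq' _ (Nat.mul_pos h1 h3)))
  have f3 : (1:K) - q^(w1*w2) ≠ 0 :=
    sub_ne_zero.mpr (Ne.symm (hq' _ (Nat.mul_pos h1 h2)))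
  have step1 : E0 q n y1 y2 y3 w1 w2 w3
      = ∑ k ∈ Finset.range (n+1), ∑ l ∈ Finset.range ((n-k)+1),
          ((1-q)^n)⁻¹ * ((n.choose k : K) * (((n-k).choose l : K))
            * dd (fun a => q^(w1*w2*w3*y1*a) * ((a+1 : ℕ) : K) / qnum (q^(w2*w3)) (a+1)) k (n-k)
            * dd (fun a => q^(w1*w2*w3*y2*a) * ((a+1 : ℕ) : K) / qnum (q^(w1*w3)) (a+1)) l (n-k-l)
            * dd (fun a => q^(w1*w2*w3*y3*a) * ((a+1 : ℕ) : K) / qnum (q^(w1*w2)) (a+1)) (n-k-l) 0) := by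
    unfold E0
    refine Finset.sum_congr rfl fun k hk => ?_
    have hk' : k ≤ n := by simpa [Nat.lt_succ_iff] using hk
    rw [show n+1-k = (n-k)+1 by omega]
    refine Finset.sum_congr rfl fun l hl => ?_
    have hl' : l ≤ n-k := by simpa [Nat.lt_succ_iff] using hl
    rw [show l + (n-k-l) = n-k by omega]
    have hb1 := beta_dd q (w2*w3) w1 y1 (w1*w2*w3) k (n-k) (by ring)
    have hb2 := beta_dd q (w1*w3) w2 y2 (w1*w2*w3) l (n-k-l) (by ring)
    have hb3 : carlitzBetaH (q^(w1*w2)) 1 (n-k-l) (w3*y3)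
        = ((1 - q^(w1*w2))^(n-k-l))⁻¹
          * dd (fun a => q^(w1*w2*w3*y3*a) * ((a+1 : ℕ) : K) / qnum (q^(w1*w2)) (a+1))
              (n-k-l) 0 := by
      have h := beta_dd q (w1*w2) w3 y3 (w1*w2*w3) (n-k-l) 0 (by ring)
      simpa using h
    have hm : (multi3 n k l (n-k-l) : K) = (n.choose k : K) * ((n-k).choose l : K) := by
      unfold multi3
      rw [multi3_eq_aux n k l hk' hl']
      push_cast; ring
    have hp := pref q f1 f2 f3 k l (n-k-l) n (by omega)
    exact rearrange hb1 hb2 hb3 hm hp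
  rw [step1]
  simp_rw [← Finset.mul_sum]
  rw [dd_triple]
  unfold G0 dd
  congr 1
  refine Finset.sum_congr rfl fun a _ => ?_
  simp only [zero_add]
  rw [show w1*w2*w3*(y1+y2+y3)*a
      = w1*w2*w3*y1*a + (w1*w2*w3*y2*a + w1*w2*w3*y3*a) by ring, pow_add, pow_add]
  ring

end Aux

theorem stmt0 {K : Type*} [Field K] [CharZero K] (q : K) (hq : q ≠ 1)
    (hq' : ∀ n : ℕ, 0 < n → q ^ n ≠ 1)
    (w : Fin 3 → ℕ) (hw : ∀ i, 0 < w i) (y1 y2 y3 n : ℕ) (σ : Equiv.Perm (Fin 3)) :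
    E0 q n y1 y2 y3 (w (σ 0)) (w (σ 1)) (w (σ 2))
      = E0 q n y1 y2 y3 (w 0) (w 1) (w 2) := by
  have key : ∀ a b c : ℕ, 0 < a → 0 < b → 0 < c →
      E0 q n y1 y2 y3 a b c = G0 q n (y1+y2+y3) (a*b*c) (b*c) (a*c) (a*b) :=
    fun a b c ha hb hc => E0_eq q hq hq' n y1 y2 y3 a b c ha hb hc
  have h6 : ∀ f : Fin 3 → Fin 3, Function.Injective f →
      (f 0 = 0 ∧ f 1 = 1 ∧ f 2 = 2) ∨ (f 0 = 0 ∧ f 1 = 2 ∧ f 2 = 1) ∨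
      (f 0 = 1 ∧ f 1 = 0 ∧ f 2 = 2) ∨ (f 0 = 1 ∧ f 1 = 2 ∧ f 2 = 0) ∨
      (f 0 = 2 ∧ f 1 = 0 ∧ f 2 = 1) ∨ (f 0 = 2 ∧ f 1 = 1 ∧ f 2 = 0) := by decide
  rcases h6 σ σ.injective with ⟨ha,hb,hc⟩|⟨ha,hb,hc⟩|⟨ha,hb,hc⟩|⟨ha,hb,hc⟩|⟨ha,hb,hc⟩|⟨ha,hb,hc⟩ <;>
    rw [ha, hb, hc] <;>
    rw [key _ _ _ (hw _) (hw _) (hw _), key _ _ _ (hw _) (hw _) (hw _)]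
  · rw [show w 0 * w 2 * w 1 = w 0 * w 1 * w 2 by ring,
      show w 2 * w 1 = w 1 * w 2 by ring, G0_swap23]
  · rw [show w 1 * w 0 * w 2 = w 0 * w 1 * w 2 by ring,
      show w 1 * w 0 = w 0 * w 1 by ring, G0_swap12]
  · rw [show w 1 * w 2 * w 0 = w 0 * w 1 * w 2 by ring,
      show w 2 * w 0 = w 0 * w 2 by ring, show w 1 * w 0 = w 0 * w 1 by ring,
      G0_swap23, G0_swap12]
  · rw [show w 2 * w 0 * w 1 = w 0 * w 1 * w 2 by ring,
      show w 2 * w 1 = w 1 * w 2 by ring,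
      show w 2 * w 0 = w 0 * w 2 by ring, G0_swap12, G0_swap23]
  · rw [show w 2 * w 1 * w 0 = w 0 * w 1 * w 2 by ring,
      show w 1 * w 0 = w 0 * w 1 by ring, show w 2 * w 0 = w 0 * w 2 by ring,
      show w 2 * w 1 = w 1 * w 2 by ring, G0_swap12, G0_swap23, G0_swap12]
end

section
/- Let w₁, w₂, w₃ be positive integers and m an integer with m ≥ 1. Then [w₁w₂]_q^m · ( q^{w₁w₂w₃} · β_{m,q^{w₁w₂}}(w₃) − β_{m,q^{w₁w₂}} ) = m · [w₁w₂]_q^m · T_{2,m−1}(w₃−1 | q^{w₁w₂}) + (q−1) · [w₁w₂]_q^{m+1} · T_{1,m}(w₃−1 | q^{w₁w₂}). Equivalently, writing Q = q^{w₁w₂}: Q^{w₃} β_{m,Q}(w₃) − β_{m,Q} = m·T_{2,m−1}(w₃−1|Q) + (Q−1)·T_{1,m}(w₃−1|Q). -/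
open Finset

/-- The Carlitz `q`-Bernoulli polynomials
`β_{n,q}(x) = (1-q)^{-n} ∑_{l=0}^{n} C(n,l) (-1)^l q^{lx} (l+1)/[l+1]_q`;
`β_{n,q} = β_{n,q}(0)` are the Carlitz `q`-Bernoulli numbers. -/
noncomputable def carlitzBeta {K : Type*} [Field K] (q : K) (n x : ℕ) : K :=
  ((1 - q) ^ n)⁻¹ * ∑ l ∈ Finset.range (n + 1),
    (n.choose l : K) * (-1) ^ l * q ^ (l * x) * ((l + 1 : ℕ) : K) / qnum q (l + 1)

/-- The `q`-power sums `T_{n,m}(w|q) = ∑_{i=0}^{w} q^{ni} [i]_q^m`. -/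
noncomputable def qT {K : Type*} [Field K] (q : K) (n m w : ℕ) : K :=
  ∑ i ∈ Finset.range (w + 1), q ^ (n * i) * qnum q i ^ m

lemma sum_binom_neg {K : Type*} [CommRing K] (y : K) (m : ℕ) :
    ∑ l ∈ range (m+1), (m.choose l : K) * (-1)^l * y^l = (1 - y)^m := by
  rw [sub_eq_add_neg, add_comm 1 (-y), add_pow]
  refine Finset.sum_congr rfl fun l _ => ?_
  rw [one_pow, neg_pow]
  ring

lemma keypoly {K : Type*} [CommRing K] (y : K) (n : ℕ) :
    ∑ l ∈ range (n+1+1), (((n+1).choose l : ℕ) : K) * (-1)^l * ((l+1 : ℕ) : K) * y^(l+1)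
      = y * (1-y)^(n+1) - ((n+1 : ℕ) : K) * y^2 * (1-y)^n := by
  have hA : ∑ l ∈ range (n+1+1), (((n+1).choose l : ℕ) : K) * (-1)^l * y^(l+1)
      = y * (1-y)^(n+1) := by
    rw [← sum_binom_neg y (n+1), mul_sum]
    exact Finset.sum_congr rfl fun l _ => by ring
  have hB : ∑ l ∈ range (n+1+1), (((n+1).choose l : ℕ) : K) * (-1)^l * (l : K) * y^(l+1)
      = -(((n:K)+1) * y^2 * (1-y)^n) := by
    rw [Finset.sum_range_succ']
    have h0 : (((n+1).choose 0 : ℕ) : K) * (-1)^0 * ((0:ℕ) : K) * y^(0+1) = 0 := by simp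
    rw [h0, add_zero]
    have : ∀ k ∈ range (n+1),
        (((n+1).choose (k+1) : ℕ) : K) * (-1)^(k+1) * ((k+1 : ℕ) : K) * y^(k+1+1)
        = (-(((n:K)+1) * y^2)) * ((n.choose k : K) * (-1)^k * y^k) := by
      intro k _
      have hc : ((n+1).choose (k+1) * (k+1) : ℕ) = (n+1) * n.choose k := by
        rw [← Nat.add_one_mul_choose_eq]
      have hc' : (((n+1).choose (k+1) : ℕ) : K) * ((k+1 : ℕ) : K)
          = ((n:K)+1) * (n.choose k : K) := by
        exact_mod_cast congrArg (Nat.cast : ℕ → K) hc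
      calc (((n+1).choose (k+1) : ℕ) : K) * (-1)^(k+1) * ((k+1 : ℕ) : K) * y^(k+1+1)
          = ((((n+1).choose (k+1) : ℕ) : K) * ((k+1 : ℕ) : K)) * ((-1)^(k+1) * y^(k+1+1)) := by
            ring
        _ = (((n:K)+1) * (n.choose k : K)) * ((-1)^(k+1) * y^(k+1+1)) := by rw [hc']
        _ = (-(((n:K)+1) * y^2)) * ((n.choose k : K) * (-1)^k * y^k) := by ring
    rw [Finset.sum_congr rfl this, ← mul_sum, sum_binom_neg]
    ring
  have hsplit : ∀ l ∈ range (n+1+1),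
      (((n+1).choose l : ℕ) : K) * (-1)^l * ((l+1 : ℕ) : K) * y^(l+1)
      = (((n+1).choose l : ℕ) : K) * (-1)^l * y^(l+1)
        + (((n+1).choose l : ℕ) : K) * (-1)^l * (l : K) * y^(l+1) := by
    intro l _
    push_cast
    ring
  rw [Finset.sum_congr rfl hsplit, Finset.sum_add_distrib, hA, hB]
  push_cast
  ring

lemma beta_norm {K : Type*} [Field K] (Q : K) (n z : ℕ) :
    Q^z * carlitzBeta Q (n+1) z
      = ((1-Q)^(n+1))⁻¹ * ∑ l ∈ range (n+1+1),
          ((n+1).choose l : K) * (-1)^l * (Q^z)^(l+1) * ((l+1:ℕ):K) / qnum Q (l+1) := by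
  unfold carlitzBeta
  rw [← mul_assoc, mul_comm (Q^z) (((1-Q)^(n+1))⁻¹), mul_assoc, Finset.mul_sum]
  congr 1
  refine Finset.sum_congr rfl fun l _ => ?_
  rw [mul_comm l z, pow_mul]
  ring

lemma step {K : Type*} [Field K] (Q : K) (hQ : ∀ k : ℕ, 1 - Q^(k+1) ≠ 0) (n x : ℕ) :
    Q^(x+1) * carlitzBeta Q (n+1) (x+1) - Q^x * carlitzBeta Q (n+1) x
      = ((n+1 : ℕ) : K) * Q^(2*x) * qnum Q x ^ n + (Q-1) * Q^x * qnum Q x ^ (n+1) := by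
  have h1 : (1:K) - Q ≠ 0 := by simpa using hQ 0
  rw [beta_norm, beta_norm]
  rw [← mul_sub, ← Finset.sum_sub_distrib]
  have hy2 : Q^(2*x) = (Q^x)^2 := by rw [mul_comm 2 x, pow_mul]
  have hx1 : Q^(x+1) = Q^x * Q := by rw [pow_succ]
  rw [hx1, hy2]
  unfold qnum
  set y := Q^x with hy
  have hterm : ∀ l ∈ range (n+1+1),
      ((n+1).choose l : K) * (-1)^l * ((y*Q))^(l+1) * ((l+1:ℕ):K) / ((1 - Q^(l+1))/(1-Q))
        - ((n+1).choose l : K) * (-1)^l * y^(l+1) * ((l+1:ℕ):K) / ((1 - Q^(l+1))/(1-Q))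
      = (Q-1) * ((((n+1).choose l : ℕ) : K) * (-1)^l * ((l+1 : ℕ) : K) * y^(l+1)) := by
    intro l _
    have hd := hQ l
    field_simp
    ring
  rw [Finset.sum_congr rfl hterm, ← Finset.mul_sum, keypoly]
  simp only [div_pow]
  field_simp
  ring

lemma telescope {K : Type*} [Field K] (Q : K) (hQ : ∀ k : ℕ, 1 - Q^(k+1) ≠ 0)
    (n w : ℕ) (hw : 0 < w) :
    Q^w * carlitzBeta Q (n+1) w - carlitzBeta Q (n+1) 0
      = ((n+1 : ℕ) : K) * qT Q 2 n (w-1) + (Q-1) * qT Q 1 (n+1) (w-1) := by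
  have hw1 : w - 1 + 1 = w := Nat.succ_pred_eq_of_pos hw
  unfold qT
  rw [hw1]
  have hsum := Finset.sum_range_sub (fun i => Q^i * carlitzBeta Q (n+1) i) w
  calc Q^w * carlitzBeta Q (n+1) w - carlitzBeta Q (n+1) 0
      = ∑ i ∈ range w, ((fun i => Q^i * carlitzBeta Q (n+1) i) (i+1)
          - (fun i => Q^i * carlitzBeta Q (n+1) i) i) := by
        rw [hsum]; simp
    _ = ∑ i ∈ range w, (((n+1 : ℕ) : K) * Q^(2*i) * qnum Q i ^ n
          + (Q-1) * Q^i * qnum Q i ^ (n+1)) := by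
        refine Finset.sum_congr rfl fun i _ => ?_
        exact step Q hQ n i
    _ = ((n+1 : ℕ) : K) * ∑ i ∈ range w, Q^(2*i) * qnum Q i ^ n
          + (Q-1) * ∑ i ∈ range w, Q^(1*i) * qnum Q i ^ (n+1) := by
        rw [Finset.sum_add_distrib, Finset.mul_sum, Finset.mul_sum]
        congr 1
        · exact Finset.sum_congr rfl fun i _ => by ring
        · exact Finset.sum_congr rfl fun i _ => by rw [one_mul]; ring

/-- For positive integers `w₁, w₂, w₃` and `m ≥ 1`, with `Q = q^{w₁w₂}`,
`[w₁w₂]_q^m (q^{w₁w₂w₃} β_{m,Q}(w₃) - β_{m,Q})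
  = m [w₁w₂]_q^m T_{2,m-1}(w₃-1|Q) + (q-1) [w₁w₂]_q^{m+1} T_{1,m}(w₃-1|Q)`. -/
theorem stmt1 {K : Type*} [Field K] [CharZero K] (q : K) (hq : q ≠ 1)
    (hq' : ∀ n : ℕ, 0 < n → q ^ n ≠ 1)
    (w1 w2 w3 : ℕ) (hw1 : 0 < w1) (hw2 : 0 < w2) (hw3 : 0 < w3)
    (m : ℕ) (hm : 1 ≤ m) :
    qnum q (w1 * w2) ^ m *
        (q ^ (w1 * w2 * w3) * carlitzBeta (q ^ (w1 * w2)) m w3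
          - carlitzBeta (q ^ (w1 * w2)) m 0)
      = (m : K) * qnum q (w1 * w2) ^ m * qT (q ^ (w1 * w2)) 2 (m - 1) (w3 - 1)
        + (q - 1) * qnum q (w1 * w2) ^ (m + 1) * qT (q ^ (w1 * w2)) 1 m (w3 - 1) := by
  obtain ⟨n, rfl⟩ : ∃ n, m = n + 1 := ⟨m - 1, (Nat.succ_pred_eq_of_pos hm).symm⟩
  have hww : 0 < w1 * w2 := Nat.mul_pos hw1 hw2
  have hQ : ∀ k : ℕ, 1 - (q ^ (w1*w2))^(k+1) ≠ 0 := by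
    intro k
    rw [← pow_mul]
    exact sub_ne_zero.mpr (Ne.symm (hq' _ (Nat.mul_pos hww k.succ_pos)))
  have key := telescope (q ^ (w1*w2)) hQ n w3 hw3
  have hpow : q ^ (w1 * w2 * w3) = (q ^ (w1*w2))^w3 := by rw [← pow_mul]
  have h1 : (q - 1) * qnum q (w1*w2) = q ^ (w1*w2) - 1 := by
    unfold qnum
    field_simp [sub_ne_zero.mpr (Ne.symm hq)]
    ring
  rw [hpow, Nat.add_sub_cancel, key]
  linear_combination -(qnum q (w1*w2)) ^ (n+1) * qT (q ^ (w1*w2)) 1 (n+1) (w3-1) * h1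
end

section
/- For all nonnegative integers n, x, y: β_{n,q}(x+y) = ∑_{l=0}^{n} binom(n,l) · q^{l x} · β_{l,q}(y) · [x]_q^{n−l}. -/
open Finset

/-- Auxiliary Vandermonde-type evaluation:
`∑_{l=m}^{n} C(n,l) C(l,m) q^{lx} (1-q^x)^{n-l} = C(n,m) q^{mx}`. -/
theorem carlitz_key {K : Type*} [Field K] (q : K) (n x m : ℕ) (hm : m ≤ n) :
    ∑ l ∈ Finset.Ico m (n + 1),
      ((n.choose l : K) * (l.choose m : K)) * q ^ (l * x) * (1 - q ^ x) ^ (n - l)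
    = (n.choose m : K) * q ^ (m * x) := by
  rw [Finset.sum_Ico_eq_sum_range]
  have h1 : n + 1 - m = (n - m) + 1 := by omega
  rw [h1]
  have hcongr : ∀ j ∈ Finset.range (n - m + 1),
      ((n.choose (m + j) : K) * ((m + j).choose m : K)) * q ^ ((m + j) * x) *
          (1 - q ^ x) ^ (n - (m + j))
      = (n.choose m : K) * q ^ (m * x) *
          ((q ^ x) ^ j * (1 - q ^ x) ^ ((n - m) - j) * ((n - m).choose j : K)) := by
    intro j hj
    have hj' : j ≤ n - m := Nat.lt_succ_iff.mp (Finset.mem_range.mp hj)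
    have h2 : n.choose (m + j) * (m + j).choose m = n.choose m * (n - m).choose j := by
      have := Nat.choose_mul (n := n) (k := m + j) (s := m) (by omega)
      simpa [Nat.add_sub_cancel_left] using this
    have h2' : ((n.choose (m + j) : K) * ((m + j).choose m : K))
        = (n.choose m : K) * ((n - m).choose j : K) := by
      exact_mod_cast congrArg (Nat.cast : ℕ → K) h2
    have h3 : (m + j) * x = m * x + j * x := by ring
    have h4 : n - (m + j) = (n - m) - j := by omega
    rw [h2', h3, h4, pow_add, ← pow_mul]
    ring
  rw [Finset.sum_congr rfl hcongr, ← Finset.mul_sum, ← add_pow]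
  have : q ^ x + (1 - q ^ x) = 1 := by ring
  rw [this, one_pow, mul_one]

/-- For all nonnegative integers `n`, `x`, `y`,
`β_{n,q}(x+y) = ∑_{l=0}^{n} C(n,l) q^{lx} β_{l,q}(y) [x]_q^{n-l}`. -/
theorem stmt4 {K : Type*} [Field K] [CharZero K] (q : K) (hq : q ≠ 1)
    (hq' : ∀ n : ℕ, 0 < n → q ^ n ≠ 1) (n x y : ℕ) :
    carlitzBeta q n (x + y)
      = ∑ l ∈ Finset.range (n + 1),
          (n.choose l : K) * q ^ (l * x) * carlitzBeta q l y * qnum q x ^ (n - l) := by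
  have hL : carlitzBeta q n (x + y)
      = ((1 - q) ^ n)⁻¹ * ∑ m ∈ Finset.range (n + 1),
          (n.choose m : K) * q ^ (m * x) *
            ((-1) ^ m * q ^ (m * y) * ((m + 1 : ℕ) : K) / qnum q (m + 1)) := by
    unfold carlitzBeta
    congr 1
    refine Finset.sum_congr rfl fun m _ => ?_
    have h3 : m * (x + y) = m * x + m * y := by ring
    rw [h3, pow_add]
    ring
  have hR : ∀ l ∈ Finset.range (n + 1),
      (n.choose l : K) * q ^ (l * x) * carlitzBeta q l y * qnum q x ^ (n - l)
      = ((1 - q) ^ n)⁻¹ * ∑ m ∈ Finset.range (l + 1),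
          ((n.choose l : K) * (l.choose m : K)) * q ^ (l * x) * (1 - q ^ x) ^ (n - l) *
            ((-1) ^ m * q ^ (m * y) * ((m + 1 : ℕ) : K) / qnum q (m + 1)) := by
    intro l hl
    have hl' : l ≤ n := Nat.lt_succ_iff.mp (Finset.mem_range.mp hl)
    have hβ : carlitzBeta q l y = ((1 - q) ^ l)⁻¹ * ∑ m ∈ Finset.range (l + 1),
        (l.choose m : K) * ((-1) ^ m * q ^ (m * y) * ((m + 1 : ℕ) : K) / qnum q (m + 1)) := by
      unfold carlitzBeta
      congr 1
      refine Finset.sum_congr rfl fun m _ => ?_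
      ring
    have hsum : ∑ m ∈ Finset.range (l + 1),
        ((n.choose l : K) * (l.choose m : K)) * q ^ (l * x) * (1 - q ^ x) ^ (n - l) *
          ((-1) ^ m * q ^ (m * y) * ((m + 1 : ℕ) : K) / qnum q (m + 1))
        = (n.choose l : K) * q ^ (l * x) * (1 - q ^ x) ^ (n - l) *
          ∑ m ∈ Finset.range (l + 1),
            (l.choose m : K) * ((-1) ^ m * q ^ (m * y) * ((m + 1 : ℕ) : K) / qnum q (m + 1)) := by
      rw [Finset.mul_sum]
      exact Finset.sum_congr rfl fun m _ => by ring
    have hn : (((1 - q) ^ n)⁻¹ : K) = ((1 - q) ^ l)⁻¹ * ((1 - q) ^ (n - l))⁻¹ := by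
      rw [← mul_inv, ← pow_add, Nat.add_sub_cancel' hl']
    rw [hβ, hsum, hn, qnum, div_pow, div_eq_mul_inv]
    ring
  rw [hL, Finset.sum_congr rfl hR, ← Finset.mul_sum]
  congr 1
  simp only [Finset.range_eq_Ico]
  rw [← Finset.sum_Ico_Ico_comm 0 (n + 1) (fun m l =>
    ((n.choose l : K) * (l.choose m : K)) * q ^ (l * x) * (1 - q ^ x) ^ (n - l) *
      ((-1) ^ m * q ^ (m * y) * ((m + 1 : ℕ) : K) / qnum q (m + 1)))]
  refine Finset.sum_congr rfl fun m hm => ?_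
  have hm' : m ≤ n := by
    have := (Finset.mem_Ico.mp hm).2; omega
  have hkey := carlitz_key q n x m hm'
  calc (n.choose m : K) * q ^ (m * x) *
        ((-1) ^ m * q ^ (m * y) * ((m + 1 : ℕ) : K) / qnum q (m + 1))
      = (∑ l ∈ Finset.Ico m (n + 1),
          ((n.choose l : K) * (l.choose m : K)) * q ^ (l * x) * (1 - q ^ x) ^ (n - l)) *
        ((-1) ^ m * q ^ (m * y) * ((m + 1 : ℕ) : K) / qnum q (m + 1)) := by rw [hkey]
    _ = _ := by rw [Finset.sum_mul]
end

section
/- The Carlitz q-Bernoulli numbers defined by the explicit formula satisfy Carlitz's recurrence: β_{0,q} = 1, and for every integer n ≥ 1, q · ∑_{l=0}^{n} binom(n,l) · q^{l} · β_{l,q} − β_{n,q} equals 1 if n = 1 and equals 0 if n > 1. -/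
open Finset

/-- The Carlitz `q`-Bernoulli numbers
`β_{n,q} = (1-q)^{-n} ∑_{l=0}^{n} C(n,l) (-1)^l (l+1)/[l+1]_q`. -/
noncomputable def carlitzBetaNum {K : Type*} [Field K] (q : K) (n : ℕ) : K :=
  ((1 - q) ^ n)⁻¹ * ∑ l ∈ Finset.range (n + 1),
    (n.choose l : K) * (-1) ^ l * ((l + 1 : ℕ) : K) / qnum q (l + 1)

lemma alt_choose_aux7 {K : Type*} [Field K] [CharZero K] (N : ℕ) :
    ∑ j ∈ range (N + 1), ((-1 : K)) ^ j * (N.choose j : K)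
      = if N = 0 then 1 else 0 := by
  have h := Int.alternating_sum_range_choose (n := N)
  have := congrArg (fun x : ℤ => (x : K)) h
  push_cast at this
  simpa using this

lemma altS_aux7 {K : Type*} [Field K] [CharZero K] (m : ℕ) :
    ∑ j ∈ range (m + 2), (((m + 1).choose j : K)) * (-1) ^ j * ((j + 1 : ℕ) : K)
      = if m = 0 then -1 else 0 := by
  have hsplit : ∀ j : ℕ, (((m + 1).choose j : K)) * (-1) ^ j * ((j + 1 : ℕ) : K)
      = (-1 : K) ^ j * ((m + 1).choose j : K)
        + ((m + 1).choose j : K) * (-1) ^ j * (j : K) := by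
    intro j; push_cast; ring
  rw [Finset.sum_congr rfl fun j _ => hsplit j, Finset.sum_add_distrib]
  have h1 : ∑ j ∈ range (m + 2), (-1 : K) ^ j * ((m + 1).choose j : K) = 0 := by
    have := alt_choose_aux7 (K := K) (m + 1)
    simpa using this
  have h2 : ∑ j ∈ range (m + 2), ((m + 1).choose j : K) * (-1) ^ j * (j : K)
      = if m = 0 then -1 else 0 := by
    rw [Finset.sum_range_succ']
    have hterm : ∀ k : ℕ, ((m + 1).choose (k + 1) : K) * (-1) ^ (k + 1) * ((k + 1 : ℕ) : K)
        = -((m + 1 : ℕ) : K) * ((-1 : K) ^ k * (m.choose k : K)) := by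
      intro k
      have h := Nat.add_one_mul_choose_eq m k
      have h' : (((m + 1) * m.choose k : ℕ) : K)
          = (((m + 1).choose (k + 1) * (k + 1) : ℕ) : K) := by
        exact_mod_cast congrArg (fun x : ℕ => (x : K)) h
      push_cast at h'
      calc ((m + 1).choose (k + 1) : K) * (-1) ^ (k + 1) * ((k + 1 : ℕ) : K)
          = ((m + 1).choose (k + 1) : K) * ((k : K) + 1) * (-1) ^ (k + 1) := by push_cast; ring
        _ = ((m : K) + 1) * (m.choose k : K) * (-1) ^ (k + 1) := by rw [← h']
        _ = -((m + 1 : ℕ) : K) * ((-1 : K) ^ k * (m.choose k : K)) := by push_cast; ring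
    simp only [hterm, Nat.cast_zero, mul_zero, add_zero]
    rw [← Finset.mul_sum, alt_choose_aux7]
    split <;> simp_all
  rw [h1, h2, zero_add]

lemma innerSumAux7 {K : Type*} [Field K] (q : K) {j n : ℕ} (hj : j ≤ n) :
    ∑ l ∈ Finset.Ico j (n + 1), (n.choose l : K) * (l.choose j : K) * q ^ l * (1 - q) ^ (n - l)
      = (n.choose j : K) * q ^ j := by
  rw [Finset.sum_Ico_eq_sum_range]
  have hlen : n + 1 - j = (n - j) + 1 := by omega
  rw [hlen]
  have hterm : ∀ k ∈ range ((n - j) + 1),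
      (n.choose (j + k) : K) * ((j + k).choose j : K) * q ^ (j + k) * (1 - q) ^ (n - (j + k))
        = (n.choose j : K) * q ^ j
            * (q ^ k * (1 - q) ^ ((n - j) - k) * ((n - j).choose k : K)) := by
    intro k hk
    rw [mem_range] at hk
    have hkn : j + k ≤ n := by omega
    have hc := @Nat.choose_mul n (j + k) j (Nat.le_add_right j k)
    have hjk : ((j + k) - j) = k := by omega
    rw [hjk] at hc
    have hc' : ((n.choose (j + k) * (j + k).choose j : ℕ) : K)
        = ((n.choose j * (n - j).choose k : ℕ) : K) := by exact_mod_cast congrArg _ hc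
    push_cast at hc'
    have hsub : n - (j + k) = (n - j) - k := by omega
    rw [hsub, pow_add]
    calc (n.choose (j + k) : K) * ((j + k).choose j : K) * (q ^ j * q ^ k)
          * (1 - q) ^ (n - j - k)
        = ((n.choose (j + k) : K) * ((j + k).choose j : K)) * (q ^ j * q ^ k)
          * (1 - q) ^ (n - j - k) := by ring
      _ = ((n.choose j : K) * ((n - j).choose k : K)) * (q ^ j * q ^ k)
          * (1 - q) ^ (n - j - k) := by rw [hc']
      _ = (n.choose j : K) * q ^ j
          * (q ^ k * (1 - q) ^ ((n - j) - k) * ((n - j).choose k : K)) := by ring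
  rw [Finset.sum_congr rfl hterm, ← Finset.mul_sum, ← add_pow]
  simp

/-- The Carlitz `q`-Bernoulli numbers satisfy Carlitz's recurrence:
`β_{0,q} = 1`, and for `n ≥ 1`,
`q ∑_{l=0}^{n} C(n,l) q^l β_{l,q} - β_{n,q}` equals `1` if `n = 1` and `0` if `n > 1`. -/
theorem stmt7 {K : Type*} [Field K] [CharZero K] (q : K) (hq : q ≠ 1)
    (hq' : ∀ n : ℕ, 0 < n → q ^ n ≠ 1) :
    carlitzBetaNum q 0 = 1 ∧
      ∀ n : ℕ, 1 ≤ n →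
        q * (∑ l ∈ Finset.range (n + 1), (n.choose l : K) * q ^ l * carlitzBetaNum q l)
            - carlitzBetaNum q n = if n = 1 then 1 else 0 := by
  have h1q : (1 : K) - q ≠ 0 := sub_ne_zero.mpr (Ne.symm hq)
  have hpow : ∀ m : ℕ, (1 : K) - q ^ (m + 1) ≠ 0 :=
    fun m => sub_ne_zero.mpr (Ne.symm (hq' (m + 1) (Nat.succ_pos m)))
  constructor
  · simp [carlitzBetaNum, qnum, div_self h1q]
  intro n hn
  set g : ℕ → K := fun j => (-1 : K) ^ j * ((j + 1 : ℕ) : K) * (1 - q) / (1 - q ^ (j + 1))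
    with hg
  have hbeta : ∀ N : ℕ, carlitzBetaNum q N
      = ((1 - q) ^ N)⁻¹ * ∑ j ∈ range (N + 1), (N.choose j : K) * g j := by
    intro N
    unfold carlitzBetaNum
    congr 1
    refine Finset.sum_congr rfl fun j _ => ?_
    rw [hg]
    simp only [qnum]
    rw [div_div_eq_mul_div]
    ring
  have hbn : ((1 : K) - q) ^ n ≠ 0 := pow_ne_zero _ h1q
  refine mul_left_cancel₀ hbn ?_
  have hβn : (1 - q) ^ n * carlitzBetaNum q n
      = ∑ j ∈ range (n + 1), (n.choose j : K) * g j := by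
    rw [hbeta n, ← mul_assoc, mul_inv_cancel₀ hbn, one_mul]
  have hT : (1 - q) ^ n * (∑ l ∈ range (n + 1), (n.choose l : K) * q ^ l * carlitzBetaNum q l)
      = ∑ j ∈ range (n + 1), (n.choose j : K) * q ^ j * g j := by
    rw [Finset.mul_sum]
    have step1 : ∀ l ∈ range (n + 1),
        (1 - q) ^ n * ((n.choose l : K) * q ^ l * carlitzBetaNum q l)
          = ∑ j ∈ range (l + 1),
              (n.choose l : K) * (l.choose j : K) * q ^ l * (1 - q) ^ (n - l) * g j := by
      intro l hl
      rw [mem_range] at hl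
      have hln : l ≤ n := by omega
      have hfac : (1 - q) ^ n * (((1 - q) ^ l)⁻¹) = (1 - q) ^ (n - l) := by
        have hsp : (1 - q) ^ n = (1 - q) ^ (n - l) * (1 - q) ^ l := by
          rw [← pow_add, Nat.sub_add_cancel hln]
        rw [hsp, mul_assoc, mul_inv_cancel₀ (pow_ne_zero _ h1q), mul_one]
      rw [hbeta l]
      calc (1 - q) ^ n * ((n.choose l : K) * q ^ l
              * (((1 - q) ^ l)⁻¹ * ∑ j ∈ range (l + 1), (l.choose j : K) * g j))
          = ((1 - q) ^ n * ((1 - q) ^ l)⁻¹) * ((n.choose l : K) * q ^ l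
              * ∑ j ∈ range (l + 1), (l.choose j : K) * g j) := by ring
        _ = (1 - q) ^ (n - l) * ((n.choose l : K) * q ^ l
              * ∑ j ∈ range (l + 1), (l.choose j : K) * g j) := by rw [hfac]
        _ = ∑ j ∈ range (l + 1),
              (n.choose l : K) * (l.choose j : K) * q ^ l * (1 - q) ^ (n - l) * g j := by
            rw [Finset.mul_sum, Finset.mul_sum]
            exact Finset.sum_congr rfl fun j _ => by ring
    rw [Finset.sum_congr rfl step1]
    have hswap := (Finset.sum_Ico_Ico_comm 0 (n + 1)
      (fun a b => (n.choose b : K) * (b.choose a : K) * q ^ b * (1 - q) ^ (n - b) * g a)).symm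
    simp only [Nat.Ico_zero_eq_range] at hswap
    rw [hswap]
    refine Finset.sum_congr rfl fun j hj => ?_
    rw [mem_range] at hj
    have hjn : j ≤ n := by omega
    calc ∑ l ∈ Finset.Ico j (n + 1),
            (n.choose l : K) * (l.choose j : K) * q ^ l * (1 - q) ^ (n - l) * g j
        = (∑ l ∈ Finset.Ico j (n + 1),
            (n.choose l : K) * (l.choose j : K) * q ^ l * (1 - q) ^ (n - l)) * g j := by
          rw [Finset.sum_mul]
      _ = (n.choose j : K) * q ^ j * g j := by rw [innerSumAux7 q hjn]
  rw [mul_sub, show (1 - q) ^ n * (q * ∑ l ∈ range (n + 1),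
        (n.choose l : K) * q ^ l * carlitzBetaNum q l)
      = q * ((1 - q) ^ n * ∑ l ∈ range (n + 1),
        (n.choose l : K) * q ^ l * carlitzBetaNum q l) from by ring, hT, hβn]
  have hterm : ∀ j : ℕ, (q ^ (j + 1) - 1) * g j
      = (1 - q) * (-((-1 : K) ^ j * ((j + 1 : ℕ) : K))) := by
    intro j
    have hd := hpow j
    rw [hg]
    calc (q ^ (j + 1) - 1) * ((-1 : K) ^ j * ((j + 1 : ℕ) : K) * (1 - q) / (1 - q ^ (j + 1)))
        = -((1 - q ^ (j + 1)) / (1 - q ^ (j + 1))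
            * ((-1 : K) ^ j * ((j + 1 : ℕ) : K) * (1 - q))) := by ring
      _ = -(1 * ((-1 : K) ^ j * ((j + 1 : ℕ) : K) * (1 - q))) := by rw [div_self hd]
      _ = (1 - q) * (-((-1 : K) ^ j * ((j + 1 : ℕ) : K))) := by ring
  have hcomb : ∀ j ∈ range (n + 1),
      q * ((n.choose j : K) * q ^ j * g j) - (n.choose j : K) * g j
        = (1 - q) * (-((n.choose j : K) * (-1) ^ j * ((j + 1 : ℕ) : K))) := by
    intro j _
    calc q * ((n.choose j : K) * q ^ j * g j) - (n.choose j : K) * g j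
        = (n.choose j : K) * ((q ^ (j + 1) - 1) * g j) := by ring
      _ = (n.choose j : K) * ((1 - q) * (-((-1 : K) ^ j * ((j + 1 : ℕ) : K)))) := by
          rw [hterm j]
      _ = (1 - q) * (-((n.choose j : K) * (-1) ^ j * ((j + 1 : ℕ) : K))) := by ring
  rw [Finset.mul_sum, ← Finset.sum_sub_distrib, Finset.sum_congr rfl hcomb, ← Finset.mul_sum]
  obtain ⟨m, rfl⟩ : ∃ m, n = m + 1 := ⟨n - 1, by omega⟩
  have : ∑ j ∈ range (m + 1 + 1), -((((m + 1).choose j : K)) * (-1) ^ j * ((j + 1 : ℕ) : K))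
      = -(if m = 0 then (-1 : K) else 0) := by
    rw [Finset.sum_neg_distrib, altS_aux7]
  rw [this]
  rcases Nat.eq_zero_or_pos m with h | h
  · subst h; norm_num
  · have : m + 1 ≠ 1 := by omega
    simp [this, Nat.pos_iff_ne_zero.mp h]
end

section
/- For every nonnegative integer n and every nonnegative integer x: β_{n,q}(x) = ∑_{l=0}^{n} binom(n,l) · q^{l x} · β_{l,q} · [x]_q^{n−l}; that is, Carlitz's explicit formula for the q-Bernoulli polynomials agrees with the expansion of the q-Bernoulli polynomials in terms of the q-Bernoulli numbers. -/
open Finset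

lemma key_sum {K : Type*} [CommRing K] (a b : K) (n j : ℕ) (hj : j ≤ n) :
    ∑ l ∈ Finset.range (n + 1), (n.choose l : K) * (l.choose j : K) * a ^ l * b ^ (n - l)
      = (n.choose j : K) * a ^ j * (a + b) ^ (n - j) := by
  rw [add_pow]
  rw [show n + 1 = j + (n - j + 1) by omega, Finset.sum_range_add]
  have h1 : ∑ l ∈ Finset.range j, (n.choose l : K) * (l.choose j : K) * a ^ l * b ^ (n - l) = 0 := by
    apply Finset.sum_eq_zero
    intro l hl
    simp [Nat.choose_eq_zero_of_lt (mem_range.mp hl)]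
  rw [h1, zero_add]
  simp only [Finset.mul_sum]
  apply Finset.sum_congr rfl
  intro m hm
  have hm' : m ≤ n - j := Nat.lt_succ_iff.mp (mem_range.mp hm)
  have hc : n.choose (j + m) * (j + m).choose j = n.choose j * (n - j).choose m := by
    have := Nat.choose_mul (n := n) (k := j + m) (s := j) (by omega)
    simpa using this
  have hcK : ((n.choose (j + m) : K) * ((j + m).choose j : K))
      = (n.choose j : K) * ((n - j).choose m : K) := by exact_mod_cast congrArg (Nat.cast (R := K)) hc
  have hsub : n - (j + m) = n - j - m := by omega
  rw [hsub, pow_add]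
  calc (n.choose (j + m) : K) * ((j + m).choose j : K) * (a ^ j * a ^ m) * b ^ (n - j - m)
      = ((n.choose (j + m) : K) * ((j + m).choose j : K)) * (a ^ j * a ^ m * b ^ (n - j - m)) := by ring
    _ = ((n.choose j : K) * ((n - j).choose m : K)) * (a ^ j * a ^ m * b ^ (n - j - m)) := by rw [hcK]
    _ = (n.choose j : K) * a ^ j * (a ^ m * b ^ (n - j - m) * ((n - j).choose m : K)) := by ring

/-- For all nonnegative integers `n` and `x`,
`β_{n,q}(x) = ∑_{l=0}^{n} C(n,l) q^{lx} β_{l,q} [x]_q^{n-l}`. -/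
theorem stmt8 {K : Type*} [Field K] [CharZero K] (q : K) (hq : q ≠ 1)
    (hq' : ∀ n : ℕ, 0 < n → q ^ n ≠ 1) (n x : ℕ) :
    carlitzBeta q n x
      = ∑ l ∈ Finset.range (n + 1),
          (n.choose l : K) * q ^ (l * x) * carlitzBetaNum q l * qnum q x ^ (n - l) := by
  have h1 : (1 : K) - q ≠ 0 := sub_ne_zero.mpr (Ne.symm hq)
  set a := q ^ x with ha
  -- step 1: per-term expansion of the RHS as a double sum
  have hstep : ∀ l ∈ Finset.range (n + 1),
      (n.choose l : K) * q ^ (l * x) * carlitzBetaNum q l * qnum q x ^ (n - l)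
        = ∑ j ∈ Finset.range (n + 1),
            ((1 - q) ^ n)⁻¹ * ((-1) ^ j * (((j + 1 : ℕ) : K) / qnum q (j + 1)))
              * ((n.choose l : K) * (l.choose j : K) * a ^ l * (1 - a) ^ (n - l)) := by
    intro l hl
    have hln : l ≤ n := Nat.lt_succ_iff.mp (mem_range.mp hl)
    have hext : (∑ j ∈ Finset.range (l + 1),
          (l.choose j : K) * (-1) ^ j * ((j + 1 : ℕ) : K) / qnum q (j + 1))
        = ∑ j ∈ Finset.range (n + 1),
          (l.choose j : K) * (-1) ^ j * ((j + 1 : ℕ) : K) / qnum q (j + 1) := by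
      apply Finset.sum_subset (Finset.range_subset_range.mpr (by omega))
      intro j hj hj'
      have : l < j := by
        simp only [Finset.mem_range] at hj hj'
        omega
      simp [Nat.choose_eq_zero_of_lt this]
    have hqx : q ^ (l * x) = a ^ l := by rw [mul_comm, pow_mul]
    have hqnumx : qnum q x = (1 - a) / (1 - q) := rfl
    rw [carlitzBetaNum, hext, hqx, hqnumx, div_pow]
    simp only [Finset.mul_sum, Finset.sum_mul]
    apply Finset.sum_congr rfl
    intro j hj
    have hpow : ((1 - q) ^ n)⁻¹ = ((1 - q) ^ l)⁻¹ * ((1 - q) ^ (n - l))⁻¹ := by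
      rw [← mul_inv, ← pow_add]
      congr 2
      omega
    rw [hpow]
    ring
  rw [Finset.sum_congr rfl hstep, Finset.sum_comm]
  -- now evaluate the inner sums with key_sum
  have hinner : ∀ j ∈ Finset.range (n + 1),
      ∑ l ∈ Finset.range (n + 1),
          ((1 - q) ^ n)⁻¹ * ((-1) ^ j * (((j + 1 : ℕ) : K) / qnum q (j + 1)))
            * ((n.choose l : K) * (l.choose j : K) * a ^ l * (1 - a) ^ (n - l))
        = ((1 - q) ^ n)⁻¹
            * ((n.choose j : K) * (-1) ^ j * a ^ j * ((j + 1 : ℕ) : K) / qnum q (j + 1)) := by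
    intro j hj
    have hjn : j ≤ n := Nat.lt_succ_iff.mp (mem_range.mp hj)
    rw [← Finset.mul_sum, key_sum a (1 - a) n j hjn]
    have : a + (1 - a) = 1 := by ring
    rw [this, one_pow]
    ring
  rw [Finset.sum_congr rfl hinner, ← Finset.mul_sum, carlitzBeta]
  congr 1
  apply Finset.sum_congr rfl
  intro j hj
  rw [show q ^ (j * x) = a ^ j by rw [mul_comm, pow_mul]]
end
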